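/- Let Σ be a finite alphabet, let r ≥ 2, and let φ : Σ → Σ^r be a uniform morphism of rank r. Then for every ε ∈ (0,1) and every symbol σ ∈ Σ there exists m ∈ ℕ such that the string φ^m(σ), obtained by m iterated applications of φ starting from σ, is not an ε-synchronization string. In particular, φ does not generate an infinite ε-synchronization string for any ε ∈ (0,1). -/

import Mathlib

/-- The length of a longest common subsequence of two strings (lists). -/
noncomputable def lcsLen {α : Type*} (S T : List α) : ℕ :=
  sSup {n | ∃ U : List α, U.length = n ∧ U.Sublist S ∧ U.Sublist T}

/-- The edit distance (insertions/deletions) between two strings, via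
`ED(S,T) = |S| + |T| - 2·LCS(S,T)`. -/
noncomputable def editDistance {α : Type*} (S T : List α) : ℕ :=
  S.length + T.length - 2 * lcsLen S T

/-- `strSlice S a b` is the substring `S[a, b)` of `S` (1-indexed, `b` excluded). -/
def strSlice {α : Type*} (S : List α) (a b : ℕ) : List α :=
  (S.drop (a - 1)).take (b - a)

/-- `islice f a b` is the substring `f[a, b)` of the infinite string `f`
(1-indexed, `b` excluded). -/
def islice {α : Type*} (f : ℕ → α) (a b : ℕ) : List α :=
  (List.range (b - a)).map fun t => f (a + t)

/-- `S` is an ε-synchronization string: for all `1 ≤ i < j < k ≤ |S| + 1`,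
`ED(S[i,j), S[j,k)) > (1-ε)(k-i)`. -/
def IsSyncString {α : Type*} (ε : ℝ) (S : List α) : Prop :=
  ∀ i j k : ℕ, 1 ≤ i → i < j → j < k → k ≤ S.length + 1 →
    (1 - ε) * ((k : ℝ) - (i : ℝ)) < (editDistance (strSlice S i j) (strSlice S j k) : ℝ)

/-- `S` is an ε-synchronization circle: every cyclic rotation of `S` is an
ε-synchronization string. -/
def IsSyncCircle {α : Type*} (ε : ℝ) (S : List α) : Prop :=
  ∀ i : ℕ, 1 ≤ i → i ≤ S.length → IsSyncString ε (S.rotate (i - 1))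

/-- An infinite ε-synchronization string (1-indexed). -/
def IsInfSyncString {α : Type*} (ε : ℝ) (f : ℕ → α) : Prop :=
  ∀ i j k : ℕ, 1 ≤ i → i < j → j < k →
    (1 - ε) * ((k : ℝ) - (i : ℝ)) < (editDistance (islice f i j) (islice f j k) : ℝ)

/-- `S` is a `c`-long-distance ε-synchronization string: for all
`1 ≤ i < j ≤ i' < j' ≤ |S| + 1` with `l = (j-i)+(j'-i')`, if the two intervals
are adjacent (`i' = j`) or `l > c · log |S|`, then
`ED(S[i,j), S[i',j')) > (1-ε)·l`. -/
noncomputable def IsLongDistSyncString {α : Type*} (c ε : ℝ) (S : List α) : Prop :=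
  ∀ i j i' j' : ℕ, 1 ≤ i → i < j → j ≤ i' → i' < j' → j' ≤ S.length + 1 →
    (i' = j ∨ c * Real.log (S.length : ℝ) < ((j : ℝ) - i) + ((j' : ℝ) - i')) →
    (1 - ε) * (((j : ℝ) - i) + ((j' : ℝ) - i')) <
      (editDistance (strSlice S i j) (strSlice S i' j') : ℝ)

/-- An infinite weak ε-synchronization string: for all `1 ≤ i < j < k`,
`ED(S[i,j), S[j,k)) ≥ ⌊(1-ε)(k-i)⌋`. -/
def IsInfWeakSyncString {α : Type*} (ε : ℝ) (f : ℕ → α) : Prop :=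
  ∀ i j k : ℕ, 1 ≤ i → i < j → j < k →
    ((⌊(1 - ε) * ((k : ℝ) - (i : ℝ))⌋ : ℤ) : ℝ) ≤
      (editDistance (islice f i j) (islice f j k) : ℝ)

namespace EDaux
variable {α : Type*}

lemma lcs_set_nonempty (S T : List α) :
    {n | ∃ U : List α, U.length = n ∧ U.Sublist S ∧ U.Sublist T}.Nonempty :=
  ⟨0, [], rfl, List.nil_sublist _, List.nil_sublist _⟩

lemma lcs_set_bdd (S T : List α) :
    BddAbove {n | ∃ U : List α, U.length = n ∧ U.Sublist S ∧ U.Sublist T} := by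
  refine ⟨S.length, fun n hn => ?_⟩
  obtain ⟨U, hU, hS, _⟩ := hn
  exact hU ▸ hS.length_le

lemma le_lcs {S T U : List α} (hS : U.Sublist S) (hT : U.Sublist T) :
    U.length ≤ lcsLen S T :=
  le_csSup (lcs_set_bdd S T) ⟨U, rfl, hS, hT⟩

lemma lcs_le_left (S T : List α) : lcsLen S T ≤ S.length := by
  refine csSup_le (lcs_set_nonempty S T) ?_
  rintro n ⟨U, rfl, hS, _⟩; exact hS.length_le

lemma lcs_le_right (S T : List α) : lcsLen S T ≤ T.length := by
  refine csSup_le (lcs_set_nonempty S T) ?_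
  rintro n ⟨U, rfl, _, hT⟩; exact hT.length_le

lemma lcs_self (S : List α) : lcsLen S S = S.length :=
  le_antisymm (lcs_le_left S S) (le_lcs (List.Sublist.refl S) (List.Sublist.refl S))

lemma ed_self (S : List α) : editDistance S S = 0 := by
  simp [editDistance, lcs_self, two_mul]

lemma ed_le_sum (S T : List α) : editDistance S T ≤ S.length + T.length :=
  Nat.sub_le _ _

lemma ed_nil_left (T : List α) : editDistance [] T ≤ T.length := by
  simpa using ed_le_sum [] T

lemma ed_nil_right (S : List α) : editDistance S [] ≤ S.length := by
  simpa using ed_le_sum S []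

lemma lcs_attained (S T : List α) :
    ∃ U : List α, U.length = lcsLen S T ∧ U.Sublist S ∧ U.Sublist T :=
  Nat.sSup_mem (lcs_set_nonempty S T) (lcs_set_bdd S T)

lemma ed_append_le (A₁ A₂ B₁ B₂ : List α) :
    editDistance (A₁ ++ A₂) (B₁ ++ B₂) ≤ editDistance A₁ B₁ + editDistance A₂ B₂ := by
  obtain ⟨U₁, hU₁, hU₁S, hU₁T⟩ := lcs_attained A₁ B₁
  obtain ⟨U₂, hU₂, hU₂S, hU₂T⟩ := lcs_attained A₂ B₂
  have hcomb : lcsLen A₁ B₁ + lcsLen A₂ B₂ ≤ lcsLen (A₁ ++ A₂) (B₁ ++ B₂) := by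
    have := le_lcs (hU₁S.append hU₂S) (hU₁T.append hU₂T)
    simpa [hU₁, hU₂] using this
  have h1a := lcs_le_left A₁ B₁
  have h1b := lcs_le_right A₁ B₁
  have h2a := lcs_le_left A₂ B₂
  have h2b := lcs_le_right A₂ B₂
  simp only [editDistance, List.length_append]
  omega

lemma ed_comm (S T : List α) : editDistance S T = editDistance T S := by
  have : ∀ S T : List α, lcsLen S T = lcsLen T S := by
    intro S T
    unfold lcsLen
    congr 1
    ext n
    exact ⟨fun ⟨U, h1, h2, h3⟩ => ⟨U, h1, h3, h2⟩, fun ⟨U, h1, h2, h3⟩ => ⟨U, h1, h3, h2⟩⟩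
  simp [editDistance, this S T]; omega

end EDaux

namespace MorAux
variable {α : Type*}

/-- one application of the morphism to a word -/
def gmor (φ : α → List α) (l : List α) : List α := (l.map φ).flatten

/-- iterated image of a letter -/
def F (φ : α → List α) (t : ℕ) (c : α) : List α := (gmor φ)^[t] [c]

lemma gmor_append (φ : α → List α) (l₁ l₂ : List α) :
    gmor φ (l₁ ++ l₂) = gmor φ l₁ ++ gmor φ l₂ := by
  simp [gmor]

lemma iter_append (φ : α → List α) (t : ℕ) (l₁ l₂ : List α) :
    (gmor φ)^[t] (l₁ ++ l₂) = (gmor φ)^[t] l₁ ++ (gmor φ)^[t] l₂ := by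
  induction t generalizing l₁ l₂ with
  | zero => simp
  | succ t ih =>
    rw [Function.iterate_succ_apply, Function.iterate_succ_apply,
      Function.iterate_succ_apply, gmor_append, ih]

lemma iter_nil (φ : α → List α) (t : ℕ) : (gmor φ)^[t] [] = [] := by
  induction t with
  | zero => rfl
  | succ t ih => rw [Function.iterate_succ_apply, show gmor φ [] = [] from rfl, ih]

lemma iter_hom (φ : α → List α) (t : ℕ) (l : List α) :
    (gmor φ)^[t] l = (l.map (F φ t)).flatten := by
  induction l with
  | nil => simp [iter_nil]
  | cons a l ih =>
    have : (a :: l) = [a] ++ l := rfl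
    rw [this, iter_append, ih]
    simp [F]

lemma F_succ (φ : α → List α) (t : ℕ) (c : α) :
    F φ (t+1) c = ((φ c).map (F φ t)).flatten := by
  have h1 : F φ (t+1) c = (gmor φ)^[t] (gmor φ [c]) := by
    simp [F, Function.iterate_succ_apply]
  have h2 : gmor φ [c] = φ c := by simp [gmor]
  rw [h1, h2, iter_hom]

lemma F_zero (φ : α → List α) (c : α) : F φ 0 c = [c] := rfl

lemma F_one (φ : α → List α) (c : α) : F φ 1 c = φ c := by
  rw [F_succ]
  have : (φ c).map (F φ 0) = (φ c).map (fun a => [a]) := by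
    simp [F_zero]
  rw [this]
  induction (φ c) with
  | nil => rfl
  | cons a l ih => simp_all

lemma F_add (φ : α → List α) (t s : ℕ) (c : α) :
    F φ (t + s) c = ((F φ s c).map (F φ t)).flatten := by
  have : F φ (t + s) c = (gmor φ)^[t] ((gmor φ)^[s] [c]) := by
    simp [F, Function.iterate_add_apply]
  rw [this, ← F, iter_hom]

lemma length_iter (φ : α → List α) (r : ℕ) (hφ : ∀ c, (φ c).length = r) (t : ℕ)
    (l : List α) : ((gmor φ)^[t] l).length = l.length * r ^ t := by
  induction t generalizing l with
  | zero => simp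
  | succ t ih =>
    rw [Function.iterate_succ_apply, ih]
    have : (gmor φ l).length = l.length * r := by
      simp only [gmor, List.length_flatten, List.map_map]
      rw [show List.length ∘ φ = fun _ => r from funext fun c => hφ c]
      simp [List.map_const', mul_comm]
    rw [this]; ring

lemma length_F (φ : α → List α) (r : ℕ) (hφ : ∀ c, (φ c).length = r) (t : ℕ) (c : α) :
    (F φ t c).length = r ^ t := by
  simp [F, length_iter φ r hφ]

/-- transitivity of occurrence -/
lemma mem_trans {φ : α → List α} {x y c : α} {t s : ℕ}
    (h1 : y ∈ F φ t x) (h2 : x ∈ F φ s c) : y ∈ F φ (t + s) c := by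
  rw [F_add]
  exact List.mem_flatten.2 ⟨F φ t x, List.mem_map.2 ⟨x, h2, rfl⟩, h1⟩

lemma mem_F_self (φ : α → List α) (c : α) : c ∈ F φ 0 c := by simp [F_zero]

/-- the power morphism: `Φ c = F φ p c`, with `gmor Φ = (gmor φ)^[p]`. -/
lemma gmor_pow (φ : α → List α) (p : ℕ) :
    gmor (F φ p) = (gmor φ)^[p] := by
  funext l
  rw [iter_hom]; rfl

lemma F_pow (φ : α → List α) (p t : ℕ) (c : α) :
    F (F φ p) t c = F φ (p * t) c := by
  simp only [F, gmor_pow, Function.iterate_mul]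

end MorAux

namespace KeyAux
open MorAux EDaux
variable {α : Type*}

/-- blockwise edit distance bound -/
lemma ed_blocks (d0 : α) (f : α → List α) :
    ∀ (us vs : List α), us.length = vs.length →
    editDistance (us.map f).flatten (vs.map f).flatten ≤
      ∑ i ∈ Finset.range us.length, editDistance (f (us.getD i d0)) (f (vs.getD i d0)) := by
  intro us
  induction us with
  | nil => intro vs hv; simp [List.length_eq_zero_iff.1 hv.symm, ed_self]
  | cons a us ih =>
    intro vs hv
    match vs with
    | [] => simp at hv
    | b :: vs =>
      simp only [List.length_cons, Nat.add_right_cancel_iff] at hv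
      simp only [List.map_cons, List.flatten_cons, List.length_cons]
      calc editDistance (f a ++ (us.map f).flatten) (f b ++ (vs.map f).flatten)
          ≤ editDistance (f a) (f b) +
            editDistance (us.map f).flatten (vs.map f).flatten := ed_append_le _ _ _ _
        _ ≤ editDistance (f a) (f b) +
            ∑ i ∈ Finset.range us.length, editDistance (f (us.getD i d0)) (f (vs.getD i d0)) := by
              exact Nat.add_le_add_left (ih vs hv) _
        _ = _ := by
              rw [Finset.sum_range_succ' _ us.length]
              simp [List.getD_cons_succ, List.getD_cons_zero]
              omega

/-- getD inside flatten of constant-length blocks -/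
lemma getD_flatten_blocks (d0 : α) (f : α → List α) (B : ℕ) (hf : ∀ x, (f x).length = B) :
    ∀ (w : List α) (q j : ℕ), q < w.length → j < B →
    ((w.map f).flatten).getD (q * B + j) d0 = (f (w.getD q d0)).getD j d0 := by
  intro w
  induction w with
  | nil => intro q j hq; simp at hq
  | cons a w ih =>
    intro q j hq hj
    match q with
    | 0 =>
      simp only [List.map_cons, List.flatten_cons, Nat.zero_mul, Nat.zero_add]
      rw [List.getD_append _ _ _ _ (by rw [hf]; exact hj)]
      simp [List.getD_cons_zero]
    | q + 1 =>
      simp only [List.map_cons, List.flatten_cons]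
      rw [List.getD_append_right _ _ _ _ (by rw [hf]; nlinarith)]
      have harith : (q + 1) * B + j - (f a).length = q * B + j := by
        rw [hf]; ring_nf; omega
      rw [harith]
      simp only [List.length_cons] at hq
      rw [ih q j (by omega) hj]
      simp [List.getD_cons_succ]

lemma length_flatten_map (φ : α → List α) (r : ℕ) (hφ : ∀ c, (φ c).length = r) (t : ℕ)
    (l : List α) : ((l.map (F φ t)).flatten).length = l.length * r ^ t := by
  rw [← iter_hom, length_iter φ r hφ]

lemma getD_take_drop (d0 : α) (u : List α) (k L i : ℕ) (hi : i < L) (h : k + L ≤ u.length) :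
    (((u.drop k).take L).getD i d0) = u.getD (k + i) d0 := by
  have h1 : i < ((u.drop k).take L).length := by
    rw [List.length_take, List.length_drop]; omega
  have h2 : k + i < u.length := by omega
  rw [List.getD_eq_getElem _ _ h1, List.getD_eq_getElem _ _ h2]
  rw [List.getElem_take, List.getElem_drop]

/-- shifted alignment bound -/
lemma ed_align (d0 : α) (φ : α → List α) (r : ℕ) (hφ : ∀ c, (φ c).length = r) (t : ℕ)
    (u v : List α) (N k₁ k₂ L : ℕ) (hu : u.length = N) (hv : v.length = N)
    (h1 : k₁ + L ≤ N) (h2 : k₂ + L ≤ N) :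
    editDistance ((u.map (F φ t)).flatten) ((v.map (F φ t)).flatten) ≤
      ((N - L) + (N - L)) * r ^ t +
      ∑ i ∈ Finset.range L, editDistance (F φ t (u.getD (k₁ + i) d0)) (F φ t (v.getD (k₂ + i) d0)) := by
  classical
  set f := F φ t with hf
  have hdecomp : ∀ (w : List α) (k : ℕ), k + L ≤ w.length →
      (w.map f).flatten = ((w.take k).map f).flatten ++ ((((w.drop k).take L).map f).flatten
        ++ ((w.drop (k + L)).map f).flatten) := by
    intro w k hk
    have hw : w = w.take k ++ ((w.drop k).take L ++ (w.drop k).drop L) := by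
      rw [List.take_append_drop, List.take_append_drop]
    have hdd : (w.drop k).drop L = w.drop (k + L) := by
      rw [List.drop_drop, Nat.add_comm]
    conv_lhs => rw [hw]
    rw [hdd, List.map_append, List.map_append, List.flatten_append, List.flatten_append]
  rw [hdecomp u k₁ (by omega), hdecomp v k₂ (by omega)]
  have hlen : ∀ (w : List α), ((w.map f).flatten).length = w.length * r ^ t :=
    fun w => length_flatten_map φ r hφ t w
  have hL1 : ((u.drop k₁).take L).length = L := by
    rw [List.length_take, List.length_drop]; omega
  have hL2 : ((v.drop k₂).take L).length = L := by
    rw [List.length_take, List.length_drop]; omega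
  have step1 := ed_append_le (((u.take k₁)).map f).flatten
    ((((u.drop k₁).take L).map f).flatten ++ ((u.drop (k₁ + L)).map f).flatten)
    (((v.take k₂)).map f).flatten
    ((((v.drop k₂).take L).map f).flatten ++ ((v.drop (k₂ + L)).map f).flatten)
  have step2 := ed_append_le ((((u.drop k₁).take L)).map f).flatten
    ((u.drop (k₁ + L)).map f).flatten
    ((((v.drop k₂).take L)).map f).flatten
    ((v.drop (k₂ + L)).map f).flatten
  have bnd1 : editDistance (((u.take k₁)).map f).flatten (((v.take k₂)).map f).flatten
      ≤ (k₁ + k₂) * r ^ t := by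
    refine (ed_le_sum _ _).trans ?_
    rw [hlen, hlen, List.length_take, List.length_take, hu, hv]
    calc min k₁ N * r ^ t + min k₂ N * r ^ t = (min k₁ N + min k₂ N) * r ^ t := by ring
      _ ≤ (k₁ + k₂) * r ^ t :=
          Nat.mul_le_mul_right _ (Nat.add_le_add (min_le_left _ _) (min_le_left _ _))
  have bnd3 : editDistance ((u.drop (k₁ + L)).map f).flatten ((v.drop (k₂ + L)).map f).flatten
      ≤ ((N - (k₁ + L)) + (N - (k₂ + L))) * r ^ t := by
    refine (ed_le_sum _ _).trans ?_
    rw [hlen, hlen, List.length_drop, List.length_drop, hu, hv, Nat.add_mul]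
  have bnd2 : editDistance ((((u.drop k₁).take L)).map f).flatten
      ((((v.drop k₂).take L)).map f).flatten
      ≤ ∑ i ∈ Finset.range L, editDistance (f (u.getD (k₁ + i) d0)) (f (v.getD (k₂ + i) d0)) := by
    have hbl := ed_blocks d0 f ((u.drop k₁).take L) ((v.drop k₂).take L) (by rw [hL1, hL2])
    rw [hL1] at hbl
    refine hbl.trans (le_of_eq ?_)
    refine Finset.sum_congr rfl fun i hi => ?_
    rw [getD_take_drop d0 u k₁ L i (Finset.mem_range.1 hi) (by omega),
        getD_take_drop d0 v k₂ L i (Finset.mem_range.1 hi) (by omega)]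
  have hmain : (k₁ + k₂) * r ^ t + ((N - (k₁ + L)) + (N - (k₂ + L))) * r ^ t
      ≤ ((N - L) + (N - L)) * r ^ t := by
    calc (k₁ + k₂) * r ^ t + ((N - (k₁ + L)) + (N - (k₂ + L))) * r ^ t
        = ((k₁ + k₂) + ((N - (k₁ + L)) + (N - (k₂ + L)))) * r ^ t := by ring
      _ ≤ ((N - L) + (N - L)) * r ^ t := Nat.mul_le_mul_right _ (by omega)
  omega

lemma getD_mem' (l : List α) (i : ℕ) (d0 : α) (h : i < l.length) : l.getD i d0 ∈ l := by
  rw [List.getD_eq_getElem _ _ h]; exact List.getElem_mem h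

set_option maxHeartbeats 2000000 in
/-- THE KEY LEMMA: in a pair-expansive system with uniform common descendants,
the normalized edit distance between images tends to 0. -/
theorem key (d0 : α) (Φ : α → List α) (R : ℕ) (hΦ : ∀ c, (Φ c).length = R) (hR : 2 ≤ R)
    (P : Finset (α × α)) (hPne : P.Nonempty)
    (hPexp : ∀ x y, (x, y) ∈ P → ∀ s x' y', x' ∈ F Φ s x → y' ∈ F Φ s y → (x', y') ∈ P)
    (n₀ : ℕ) (hn₀ : 1 ≤ n₀)
    (hU : ∀ x y, (x, y) ∈ P → ∃ z, z ∈ F Φ n₀ x ∧ z ∈ F Φ n₀ y)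
    (η : ℝ) (hη : 0 < η) :
    ∃ T, ∀ x y, (x, y) ∈ P → (editDistance (F Φ T x) (F Φ T y) : ℝ) < η * (R : ℝ) ^ T := by
  classical
  have hRpos : (0:ℝ) < (R:ℝ) := by positivity
  have hRt : ∀ t : ℕ, (0:ℝ) < (R:ℝ) ^ t := fun t => by positivity
  set M : ℕ → ℕ := fun t => P.sup fun xy => editDistance (F Φ t xy.1) (F Φ t xy.2) with hM
  have hMle : ∀ t x y, (x, y) ∈ P → editDistance (F Φ t x) (F Φ t y) ≤ M t := by
    intro t x y h
    exact Finset.le_sup (f := fun xy => editDistance (F Φ t xy.1) (F Φ t xy.2)) h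
  have hMex : ∀ t, ∃ xy ∈ P, M t = editDistance (F Φ t xy.1) (F Φ t xy.2) :=
    fun t => Finset.exists_mem_eq_sup _ hPne _
  set m : ℕ → ℝ := fun t => (M t : ℝ) / (R : ℝ) ^ t with hm
  have hm0 : ∀ t, 0 ≤ m t := fun t => by positivity
  have hbdd : BddBelow (Set.range m) := ⟨0, by rintro x ⟨t, rfl⟩; exact hm0 t⟩
  set μ := ⨅ t, m t with hμ
  have hμ0 : 0 ≤ μ := le_ciInf hm0
  have hμle : ∀ t, μ ≤ m t := fun t => ciInf_le hbdd t
  have hμeq : μ = 0 := by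
    by_contra hne
    have hμpos : 0 < μ := lt_of_le_of_ne hμ0 (Ne.symm hne)
    set B := R ^ n₀ with hB
    have hB1 : 1 ≤ B := Nat.one_le_pow _ _ (by omega)
    have hBR : (0:ℝ) < (B:ℝ) := by exact_mod_cast hB1.trans_lt' (by omega)
    set η' : ℝ := μ / (8 * (B:ℝ)^3) with hη'def
    have hη'pos : 0 < η' := by positivity
    obtain ⟨t, ht⟩ : ∃ t, m t < μ + η' := by
      refine exists_lt_of_ciInf_lt ?_
      rw [← hμ]; linarith
    obtain ⟨S', hS'⟩ : ∃ S', (2*(B:ℝ)^2 + 2) + 32*(B:ℝ)^4 / μ < (R:ℝ)^S' :=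
      pow_unbounded_of_one_lt _ (by exact_mod_cast hR.trans_lt' one_lt_two)
    set Nb := R ^ S' with hNb
    set S := n₀ + S' with hS
    set N := R ^ S with hN
    have hNeq : N = Nb * B := by rw [hN, hNb, hB, hS, pow_add, mul_comm]
    have hNb1 : 2 * B^2 + 2 < Nb := by
      have h1 : (2*(B:ℝ)^2 + 2) < (Nb:ℝ) := by
        have : (0:ℝ) ≤ 32*(B:ℝ)^4 / μ := by positivity
        rw [hNb]; push_cast; linarith
      exact_mod_cast (by push_cast at h1 ⊢; linarith : ((2*B^2 + 2 : ℕ) : ℝ) < (Nb:ℝ))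
    have hNb2 : 2 ≤ Nb := by nlinarith
    obtain ⟨⟨c, d⟩, hcd, hMts⟩ := hMex (t + S)
    set u := F Φ S c with hu
    set v := F Φ S d with hv
    have hulen : u.length = N := by rw [hu, length_F Φ R hΦ, hN]
    have hvlen : v.length = N := by rw [hv, length_F Φ R hΦ, hN]
    have hblock : ∀ x : α, (F Φ n₀ x).length = B := fun x => by
      rw [length_F Φ R hΦ, hB]
    -- per-q common-letter coincidence
    have PQ : ∀ q : ℕ, ∃ j₁ j₂ : ℕ, j₁ < B ∧ j₂ < B ∧ (q < Nb →
        u.getD (q * B + j₁) d0 = v.getD (q * B + j₂) d0) := by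
      intro q
      by_cases hq : q < Nb
      · set wu := F Φ S' c with hwu
        set wv := F Φ S' d with hwv
        have hud : u = (wu.map (F Φ n₀)).flatten := by rw [hu, hS, F_add, hwu]
        have hvd : v = (wv.map (F Φ n₀)).flatten := by rw [hv, hS, F_add, hwv]
        have hqu : q < wu.length := by rw [hwu, length_F Φ R hΦ]; exact hq
        have hqv : q < wv.length := by rw [hwv, length_F Φ R hΦ]; exact hq
        have hpair : (wu.getD q d0, wv.getD q d0) ∈ P :=
          hPexp c d hcd S' _ _ (by rw [hwu]; exact getD_mem' _ _ _ (by rwa [← hwu]))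
            (by rw [hwv]; exact getD_mem' _ _ _ (by rwa [← hwv]))
        obtain ⟨z, hz1, hz2⟩ := hU _ _ hpair
        obtain ⟨j₁, hj₁lt, hj₁⟩ := List.getElem_of_mem hz1
        obtain ⟨j₂, hj₂lt, hj₂⟩ := List.getElem_of_mem hz2
        have hj₁B : j₁ < B := by rwa [hblock] at hj₁lt
        have hj₂B : j₂ < B := by rwa [hblock] at hj₂lt
        refine ⟨j₁, j₂, hj₁B, hj₂B, fun _ => ?_⟩
        rw [hud, hvd, getD_flatten_blocks d0 (F Φ n₀) B hblock wu q j₁ hqu hj₁B,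
          getD_flatten_blocks d0 (F Φ n₀) B hblock wv q j₂ hqv hj₂B,
          List.getD_eq_getElem (F Φ n₀ (wu.getD q d0)) d0
            (show j₁ < (F Φ n₀ (wu.getD q d0)).length by rw [hblock]; exact hj₁B),
          List.getD_eq_getElem (F Φ n₀ (wv.getD q d0)) d0
            (show j₂ < (F Φ n₀ (wv.getD q d0)).length by rw [hblock]; exact hj₂B)]
        rw [hj₁, hj₂]
      · exact ⟨0, 0, by omega, by omega, fun h => absurd h hq⟩
    choose ju jv hjuB hjvB hcoin using PQ
    -- pigeonhole on the pair of offsets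
    set Qg := Finset.range (Nb - 1) with hQg
    have hmaps : ∀ q ∈ Qg, (ju q, jv q) ∈ Finset.range B ×ˢ Finset.range B := by
      intro q _; simp [Finset.mem_product, hjuB q, hjvB q]
    have hcard : (Finset.range B ×ˢ Finset.range B).card * ((Nb - 1) / (B * B)) ≤ Qg.card := by
      have h1 : (Finset.range B ×ˢ Finset.range B).card = B * B := by
        simp [Finset.card_product]
      have h2 : Qg.card = Nb - 1 := by simp [hQg]
      rw [h1, h2, mul_comm]
      exact Nat.div_mul_le_self _ _
    obtain ⟨⟨k₁, k₂⟩, hkmem, hfib⟩ :=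
      Finset.exists_le_card_fiber_of_mul_le_card_of_maps_to hmaps
        ⟨(0, 0), by simp [Finset.mem_product]; omega⟩ hcard
    set CF := (Qg.filter fun q => (ju q, jv q) = (k₁, k₂)).card with hCF
    have hk₁B : k₁ < B := by
      have := (Finset.mem_product.1 hkmem).1; simpa using this
    have hk₂B : k₂ < B := by
      have := (Finset.mem_product.1 hkmem).2; simpa using this
    -- alignment
    set L := N - B with hL
    have hBN : B ≤ N := by rw [hNeq]; nlinarith
    have h2BN : 2 * B ≤ N := by rw [hNeq]; nlinarith
    have halign := ed_align d0 Φ R hΦ t u v N k₁ k₂ L hulen hvlen (by omega) (by omega)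
    have hED : editDistance (F Φ (t+S) c) (F Φ (t+S) d) ≤ (B + B) * R ^ t +
        ∑ i ∈ Finset.range L, editDistance (F Φ t (u.getD (k₁ + i) d0))
          (F Φ t (v.getD (k₂ + i) d0)) := by
      have h1 : F Φ (t + S) c = (u.map (F Φ t)).flatten := by rw [F_add, hu]
      have h2 : F Φ (t + S) d = (v.map (F Φ t)).flatten := by rw [F_add, hv]
      rw [h1, h2]
      have : N - L = B := by omega
      rw [this] at halign
      exact halign
    -- sum bound via coincidences
    set Ico := (Qg.filter fun q => (ju q, jv q) = (k₁, k₂)).image (fun q => q * B) with hIco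
    have hIsub : Ico ⊆ Finset.range L := by
      intro i hi
      obtain ⟨q, hqf, rfl⟩ := Finset.mem_image.1 hi
      have hq : q < Nb - 1 := by
        have := Finset.mem_filter.1 hqf |>.1
        rwa [hQg, Finset.mem_range] at this
      rw [Finset.mem_range, hL]
      have : q * B + 2 * B ≤ N := by
        rw [hNeq]
        calc q * B + 2 * B = (q + 2) * B := by ring
          _ ≤ Nb * B := Nat.mul_le_mul_right _ (by omega)
      omega
    have hIcard : Ico.card = CF := by
      rw [hIco, hCF]
      exact Finset.card_image_of_injective _ fun a b hab =>
        Nat.eq_of_mul_eq_mul_right (by omega) hab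
    have hsum : ∑ i ∈ Finset.range L, editDistance (F Φ t (u.getD (k₁ + i) d0))
        (F Φ t (v.getD (k₂ + i) d0)) ≤ (L - CF) * M t := by
      have hpoint : ∀ i ∈ Finset.range L,
          editDistance (F Φ t (u.getD (k₁ + i) d0)) (F Φ t (v.getD (k₂ + i) d0))
            ≤ if i ∈ Ico then 0 else M t := by
        intro i hi
        by_cases hmem : i ∈ Ico
        · simp only [hmem, if_true]
          obtain ⟨q, hqf, rfl⟩ := Finset.mem_image.1 hmem
          obtain ⟨hqQ, hqk⟩ := Finset.mem_filter.1 hqf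
          have hqNb : q < Nb := by
            rw [hQg, Finset.mem_range] at hqQ; omega
          have hco := hcoin q hqNb
          have hjk1 : ju q = k₁ := congrArg Prod.fst hqk
          have hjk2 : jv q = k₂ := congrArg Prod.snd hqk
          rw [hjk1, hjk2] at hco
          rw [Nat.add_comm k₁ (q * B), Nat.add_comm k₂ (q * B), hco, ed_self]
        · simp only [hmem, if_false]
          have hiL : i < L := Finset.mem_range.1 hi
          have hpair : (u.getD (k₁ + i) d0, v.getD (k₂ + i) d0) ∈ P := by
            refine hPexp c d hcd S _ _ ?_ ?_
            · rw [hu]; exact getD_mem' _ _ _ (by rw [← hu, hulen]; omega)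
            · rw [hv]; exact getD_mem' _ _ _ (by rw [← hv, hvlen]; omega)
          exact hMle t _ _ hpair
      calc ∑ i ∈ Finset.range L, editDistance (F Φ t (u.getD (k₁ + i) d0))
            (F Φ t (v.getD (k₂ + i) d0))
          ≤ ∑ i ∈ Finset.range L, (if i ∈ Ico then 0 else M t) := Finset.sum_le_sum hpoint
        _ = ∑ i ∈ (Finset.range L) \ Ico, M t := by
            rw [← Finset.sum_sdiff hIsub]
            have h1 : ∑ i ∈ Ico, (if i ∈ Ico then 0 else M t) = 0 :=
              Finset.sum_eq_zero fun i hi => by simp [hi]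
            have h2 : ∑ i ∈ Finset.range L \ Ico, (if i ∈ Ico then 0 else M t)
                = ∑ i ∈ Finset.range L \ Ico, M t :=
              Finset.sum_congr rfl fun i hi => by simp [(Finset.mem_sdiff.1 hi).2]
            rw [h1, h2, add_zero]
        _ = (L - CF) * M t := by
            rw [Finset.sum_const, Finset.card_sdiff_of_subset hIsub, hIcard, Finset.card_range, smul_eq_mul]
    -- assemble the numeric contradiction
    have hMnat : M (t + S) ≤ (B + B) * R ^ t + (L - CF) * M t := by
      rw [hMts]
      exact hED.trans (Nat.add_le_add_left hsum _)
    have hCFQ : CF ≤ Nb - 1 := by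
      rw [hCF]
      calc (Qg.filter fun q => (ju q, jv q) = (k₁, k₂)).card ≤ Qg.card :=
            Finset.card_filter_le _ _
        _ = Nb - 1 := by rw [hQg, Finset.card_range]
    have hCFL : CF ≤ L := by
      have h1 : Nb - 1 ≤ (Nb - 1) * B := Nat.le_mul_of_pos_right _ (by omega)
      have h2 : (Nb - 1) * B = Nb * B - B := by rw [Nat.sub_mul, one_mul]
      have h3 : L = Nb * B - B := by rw [hL, hNeq]
      omega
    have hLN : L ≤ N := Nat.sub_le _ _
    have hrt : (0:ℝ) < (R:ℝ) ^ t := hRt t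
    have hb1 : (1:ℝ) ≤ (B:ℝ) := by exact_mod_cast hB1
    have hNcast : (N:ℝ) = (Nb:ℝ) * (B:ℝ) := by exact_mod_cast hNeq
    have hRS : (R:ℝ) ^ S = (N:ℝ) := by rw [hN]; push_cast; rfl
    have h1 : μ * ((N:ℝ) * ((R:ℝ) ^ t)) ≤ (M (t + S) : ℝ) := by
      have h := hμle (t + S)
      rw [hm] at h
      have h'' : μ * (R:ℝ) ^ (t + S) ≤ (M (t + S) : ℝ) := by
        have := (le_div_iff₀ (hRt (t + S))).1 h
        exact this
      calc μ * ((N:ℝ) * (R:ℝ) ^ t) = μ * (R:ℝ) ^ (t + S) := by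
            rw [pow_add, ← hRS]; ring
        _ ≤ _ := h''
    have h2 : (M t : ℝ) ≤ (μ + η') * (R:ℝ) ^ t := by
      have := ht
      rw [hm] at this
      exact le_of_lt ((div_lt_iff₀ hrt).1 this)
    have h3 : (M (t + S) : ℝ) ≤ 2 * (B:ℝ) * (R:ℝ)^t + ((N:ℝ) - (CF:ℝ)) * ((μ + η') * (R:ℝ)^t) := by
      have hc : ((L - CF : ℕ) : ℝ) ≤ (N:ℝ) - (CF:ℝ) := by
        rw [Nat.cast_sub hCFL]
        have : (L:ℝ) ≤ (N:ℝ) := by exact_mod_cast hLN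
        linarith
      have hcast : (M (t + S) : ℝ) ≤ ((B + B : ℕ) : ℝ) * (R:ℝ)^t + ((L - CF : ℕ) : ℝ) * (M t : ℝ) := by
        exact_mod_cast hMnat
      have hmt0 : (0:ℝ) ≤ (M t : ℝ) := by positivity
      have hfac : ((L - CF : ℕ) : ℝ) * (M t : ℝ) ≤ ((N:ℝ) - (CF:ℝ)) * ((μ + η') * (R:ℝ)^t) := by
        apply mul_le_mul hc h2 hmt0
        have : (0:ℝ) ≤ ((L - CF : ℕ) : ℝ) := by positivity
        linarith
      calc (M (t + S) : ℝ) ≤ ((B + B : ℕ) : ℝ) * (R:ℝ)^t + ((L - CF : ℕ) : ℝ) * (M t : ℝ) := hcast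
        _ ≤ 2 * (B:ℝ) * (R:ℝ)^t + ((N:ℝ) - (CF:ℝ)) * ((μ + η') * (R:ℝ)^t) := by
            push_cast
            linarith [hfac]
    have h4 : μ * (N:ℝ) ≤ 2 * (B:ℝ) + ((N:ℝ) - (CF:ℝ)) * (μ + η') := by
      have := h1.trans h3
      have hexp : (2 * (B:ℝ) + ((N:ℝ) - (CF:ℝ)) * (μ + η')) * ((R:ℝ)^t)
          = 2 * (B:ℝ) * (R:ℝ)^t + ((N:ℝ) - (CF:ℝ)) * ((μ + η') * (R:ℝ)^t) := by ring
      have hh : μ * (N:ℝ) * ((R:ℝ)^t) ≤ (2 * (B:ℝ) + ((N:ℝ) - (CF:ℝ)) * (μ + η')) * ((R:ℝ)^t) := by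
        rw [hexp]
        calc μ * (N:ℝ) * ((R:ℝ)^t) = μ * ((N:ℝ) * (R:ℝ)^t) := by ring
          _ ≤ _ := this
      exact le_of_mul_le_mul_right hh hrt
    -- CF * μ ≤ 2B + Nη'
    have hCFN : (CF:ℝ) ≤ (N:ℝ) := by
      have : CF ≤ N := hCFL.trans hLN
      exact_mod_cast this
    have h5 : (CF:ℝ) * μ ≤ 2 * (B:ℝ) + (N:ℝ) * η' := by nlinarith [hη'pos, hμpos]
    -- lower bound CF ≥ (Nb - B²)/B²
    set qq := (Nb - 1) / (B * B) with hqq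
    have hdm := Nat.div_add_mod (Nb - 1) (B * B)
    have hmodlt : (Nb - 1) % (B * B) < B * B := Nat.mod_lt _ (by positivity)
    have hq1 : (qq:ℝ) * ((B:ℝ) * (B:ℝ)) ≥ (Nb:ℝ) - (B:ℝ) * (B:ℝ) := by
      have hcast : ((B*B : ℕ):ℝ) * (qq:ℝ) + (((Nb - 1) % (B * B) : ℕ):ℝ) = ((Nb - 1 : ℕ):ℝ) := by
        exact_mod_cast hdm
      have hcast2 : ((Nb - 1 : ℕ):ℝ) = (Nb:ℝ) - 1 := by
        rw [Nat.cast_sub (by omega)]; norm_num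
      have hcast3 : (((Nb - 1) % (B * B) : ℕ):ℝ) ≤ (B:ℝ) * (B:ℝ) - 1 := by
        have : ((Nb - 1) % (B * B)) ≤ B * B - 1 := by omega
        have hc := (Nat.cast_le (α := ℝ)).2 this
        calc (((Nb - 1) % (B * B) : ℕ):ℝ) ≤ ((B * B - 1 : ℕ):ℝ) := hc
          _ = (B:ℝ) * (B:ℝ) - 1 := by
              rw [Nat.cast_sub (by nlinarith [hB1])]; push_cast; ring
      push_cast at hcast
      nlinarith
    have hCFq : (qq:ℝ) ≤ (CF:ℝ) := by exact_mod_cast hfib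
    -- final contradiction
    have hNbR : (2*(B:ℝ)^2 + 2) + 32*(B:ℝ)^4 / μ < (Nb:ℝ) := by
      rw [hNb]; push_cast; exact hS'
    have hμη : η' * (8 * (B:ℝ)^3) = μ := div_mul_cancel₀ _ (by positivity)
    have hdiv : (32*(B:ℝ)^4 / μ) * μ = 32*(B:ℝ)^4 := div_mul_cancel₀ _ (ne_of_gt hμpos)
    -- chain of products
    have hB2 : (0:ℝ) ≤ (B:ℝ)*(B:ℝ) := by positivity
    have s1 : ((Nb:ℝ) - (B:ℝ)*(B:ℝ)) * μ ≤ (qq:ℝ) * ((B:ℝ)*(B:ℝ)) * μ :=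
      mul_le_mul_of_nonneg_right hq1 hμpos.le
    have s2 : (qq:ℝ) * ((B:ℝ)*(B:ℝ)) * μ ≤ (CF:ℝ) * ((B:ℝ)*(B:ℝ)) * μ := by
      have := mul_le_mul_of_nonneg_right (mul_le_mul_of_nonneg_right hCFq hB2) hμpos.le
      linarith
    have s3 : (CF:ℝ) * ((B:ℝ)*(B:ℝ)) * μ ≤ (2*(B:ℝ) + (N:ℝ)*η') * ((B:ℝ)*(B:ℝ)) := by
      have h := mul_le_mul_of_nonneg_right h5 hB2
      calc (CF:ℝ) * ((B:ℝ)*(B:ℝ)) * μ = (CF:ℝ) * μ * ((B:ℝ)*(B:ℝ)) := by ring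
        _ ≤ _ := h
    have s4 : (N:ℝ)*η'*((B:ℝ)*(B:ℝ)) = (Nb:ℝ)*μ/8 := by
      rw [hη'def, hNcast]
      have hBne : (B:ℝ) ≠ 0 := ne_of_gt hBR
      field_simp
    have s5 : (2*(B:ℝ) + (N:ℝ)*η') * ((B:ℝ)*(B:ℝ))
        = 2*(B:ℝ)^3 + (N:ℝ)*η'*((B:ℝ)*(B:ℝ)) := by ring
    have E1 : (Nb:ℝ)*μ - (B:ℝ)^2*μ ≤ 2*(B:ℝ)^3 + (Nb:ℝ)*μ/8 := by
      have hring : ((Nb:ℝ) - (B:ℝ)*(B:ℝ)) * μ = (Nb:ℝ)*μ - (B:ℝ)^2*μ := by ring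
      linarith [s1, s2, s3, s4, s5]
    have E2 : 2*(B:ℝ)^2*μ + 2*μ + 32*(B:ℝ)^4 ≤ (Nb:ℝ)*μ := by
      have h := mul_le_mul_of_nonneg_right (le_of_lt hNbR) (le_of_lt hμpos)
      have hring : ((2*(B:ℝ)^2 + 2) + 32*(B:ℝ)^4 / μ) * μ
          = 2*(B:ℝ)^2*μ + 2*μ + (32*(B:ℝ)^4 / μ) * μ := by ring
      rw [hring, hdiv] at h
      linarith
    have hB34 : (B:ℝ)^3 ≤ (B:ℝ)^4 := by nlinarith [hb1, hBR]
    have hB4 : (0:ℝ) < (B:ℝ)^4 := by positivity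
    have hB2μ : (0:ℝ) ≤ (B:ℝ)^2*μ := by positivity
    linarith [E1, E2, hB34, hB4, hB2μ, hμpos]

  -- conclusion from μ = 0
  have : iInf m < η := by rw [← hμ, hμeq]; exact hη
  obtain ⟨T, hT⟩ := exists_lt_of_ciInf_lt this
  refine ⟨T, fun x y hxy => ?_⟩
  have h1 : (editDistance (F Φ T x) (F Φ T y) : ℝ) ≤ (M T : ℝ) := by
    exact_mod_cast hMle T x y hxy
  have h2 : (M T : ℝ) < η * (R:ℝ)^T := by
    rw [hm] at hT
    have := (div_lt_iff₀ (hRt T)).1 hT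
    linarith
  linarith

end KeyAux

namespace SchurAux

lemma smul_mem (Rset : Set ℕ) (hadd : ∀ a ∈ Rset, ∀ b ∈ Rset, a + b ∈ Rset) :
    ∀ (n : ℕ) (q : ℕ), q ∈ Rset → 0 < n → n * q ∈ Rset := by
  intro n
  induction n with
  | zero => intro q _ h; omega
  | succ n ih =>
    intro q hq _
    rcases Nat.eq_zero_or_pos n with h0 | hpos
    · simpa [h0] using hq
    · have := hadd _ (ih q hq hpos) _ hq
      have he : (n + 1) * q = n * q + q := by ring
      rwa [he]

lemma comb_mem (Rset : Set ℕ) (hadd : ∀ a ∈ Rset, ∀ b ∈ Rset, a + b ∈ Rset)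
    (n : ℕ) (co : Fin n → ℕ) (el : Fin n → ℕ) (hel : ∀ i, el i ∈ Rset) :
    (∑ i, co i * el i) = 0 ∨ (∑ i, co i * el i) ∈ Rset := by
  classical
  refine Finset.sum_induction _ (fun x => x = 0 ∨ x ∈ Rset) ?_ (Or.inl rfl) ?_
  · rintro a b (rfl | ha) (rfl | hb)
    · simp
    · simpa using Or.inr hb
    · simpa using Or.inr ha
    · exact Or.inr (hadd _ ha _ hb)
  · intro i _
    rcases Nat.eq_zero_or_pos (co i) with h0 | hpos
    · simp [h0]
    · exact Or.inr (smul_mem Rset hadd _ _ (hel i) hpos)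

theorem schur (Rset : Set ℕ) (hadd : ∀ a ∈ Rset, ∀ b ∈ Rset, a + b ∈ Rset)
    (p : ℕ) (hp : p ∈ Rset) (hppos : 0 < p) (hpos : ∀ q ∈ Rset, 0 < q) :
    ∃ d₀ N₀ : ℕ, 0 < d₀ ∧ 1 ≤ N₀ ∧ (∀ q ∈ Rset, d₀ ∣ q) ∧
      ∀ j, N₀ ≤ j → d₀ * j ∈ Rset := by
  classical
  set I : Ideal ℤ := Ideal.span ((fun q : ℕ => (q : ℤ)) '' Rset) with hI
  obtain ⟨gz, hgz⟩ := IsPrincipalIdealRing.principal I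
  set d₀ := gz.natAbs with hd₀
  have hG1 : ∀ q ∈ Rset, d₀ ∣ q := by
    intro q hq
    have hmem : (q : ℤ) ∈ I := Ideal.subset_span ⟨q, hq, rfl⟩
    rw [hgz] at hmem
    have : gz ∣ (q : ℤ) := by
      rwa [Ideal.submodule_span_eq, Ideal.mem_span_singleton] at hmem
    have h2 : (d₀ : ℤ) ∣ (q : ℤ) := (Int.natAbs_dvd).2 this
    exact_mod_cast h2
  have hd₀pos : 0 < d₀ := by
    rcases Nat.eq_zero_or_pos d₀ with h0 | h
    · exfalso
      have := hG1 p hp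
      rw [h0] at this
      omega
    · exact h
  -- representation of gz as a combination
  have hgzI : gz ∈ I := by
    rw [hgz]
    exact Ideal.mem_span_singleton_self gz
  rw [hI] at hgzI
  have hgzspan : gz ∈ Submodule.span ℤ ((fun q : ℕ => (q : ℤ)) '' Rset) := hgzI
  obtain ⟨n, f, g, hsum⟩ := (Submodule.mem_span_set').1 hgzspan
  -- extract natural values
  have hval : ∀ i : Fin n, ∃ a : ℕ, a ∈ Rset ∧ ((a : ℤ)) = (g i : ℤ) := by
    intro i
    obtain ⟨a, ha, hae⟩ := (g i).2
    exact ⟨a, ha, hae⟩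
  choose a ha hae using hval
  set A := ∑ i, (f i).toNat * a i with hA
  set Bn := ∑ i, (-(f i)).toNat * a i with hBn
  have hABz : (A : ℤ) - (Bn : ℤ) = gz := by
    have hterm : ∀ i : Fin n, ((f i).toNat : ℤ) * (a i : ℤ) - ((-(f i)).toNat : ℤ) * (a i : ℤ)
        = f i • (g i : ℤ) := by
      intro i
      rw [← hae i, smul_eq_mul]
      have h : ((f i).toNat : ℤ) - ((-(f i)).toNat : ℤ) = f i := by omega
      nlinarith [h]
    rw [hA, hBn]
    push_cast
    rw [← Finset.sum_sub_distrib, ← hsum]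
    exact Finset.sum_congr rfl fun i _ => hterm i
  have hAmem : A = 0 ∨ A ∈ Rset := comb_mem Rset hadd n _ _ ha
  have hBmem : Bn = 0 ∨ Bn ∈ Rset := comb_mem Rset hadd n _ _ ha
  -- WLOG A' = B' + d₀
  obtain ⟨A', B', hA'mem, hB'mem, hABd⟩ :
      ∃ A' B' : ℕ, (A' = 0 ∨ A' ∈ Rset) ∧ (B' = 0 ∨ B' ∈ Rset) ∧ A' = B' + d₀ := by
    rcases le_or_gt 0 gz with hge | hlt
    · refine ⟨A, Bn, hAmem, hBmem, ?_⟩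
      have : (gz : ℤ) = d₀ := by rw [hd₀]; omega
      omega
    · refine ⟨Bn, A, hBmem, hAmem, ?_⟩
      have : (gz : ℤ) = -(d₀ : ℤ) := by rw [hd₀]; omega
      omega
  rcases hB'mem with hB0 | hBr
  · -- B' = 0 : d₀ itself is in Rset
    have hA'd : A' = d₀ := by omega
    have hA'r : A' ∈ Rset := by
      rcases hA'mem with h0 | h
      · exfalso; omega
      · exact h
    refine ⟨d₀, 1, hd₀pos, le_refl 1, hG1, fun j hj => ?_⟩
    have := smul_mem Rset hadd j d₀ (hA'd ▸ hA'r) (by omega)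
    rwa [mul_comm] at this
  · -- B' ∈ Rset
    have hB'pos : 0 < B' := hpos _ hBr
    have hA'r : A' ∈ Rset := by
      rcases hA'mem with h0 | h
      · exfalso; omega
      · exact h
    obtain ⟨b, hb⟩ := hG1 _ hBr
    have hbpos : 0 < b := by
      rcases Nat.eq_zero_or_pos b with h0 | h
      · exfalso; rw [h0, Nat.mul_zero] at hb; omega
      · exact h
    refine ⟨d₀, (b+1)*(b+1), hd₀pos, by nlinarith [hbpos], hG1, fun j hj => ?_⟩
    set x := j % b with hx
    have hxb : x < b := Nat.mod_lt _ hbpos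
    have hdvd : b ∣ (j - x) := Nat.dvd_sub_mod j
    set q := (j - x) / b with hq
    have hqb : b * q = j - x := Nat.mul_div_cancel' hdvd
    have hxj : x ≤ j := Nat.mod_le _ _
    have hqge : b + 1 ≤ q := by
      by_contra hcon
      push_neg at hcon
      have hq' : (q:ℤ) ≤ (b:ℤ) := by exact_mod_cast Nat.lt_succ_iff.mp hcon
      have hqbz : (b:ℤ) * (q:ℤ) = (j:ℤ) - (x:ℤ) := by
        zify [hxj] at hqb
        exact hqb
      have hj' : ((b:ℤ)+1)*((b:ℤ)+1) ≤ (j:ℤ) := by exact_mod_cast hj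
      have hx' : (x:ℤ) < (b:ℤ) := by exact_mod_cast hxb
      have hb' : (1:ℤ) ≤ (b:ℤ) := by exact_mod_cast hbpos
      nlinarith [mul_le_mul_of_nonneg_left hq' (by linarith : (0:ℤ) ≤ (b:ℤ))]
    have hyx : x ≤ q := by omega
    set y := q - x with hy
    have hkey : x * A' + y * B' = d₀ * j := by
      have e1z : (A' : ℤ) - B' - d₀ = 0 := by
        have := hABd; omega
      have e2z : (B' : ℤ) - (d₀ : ℤ) * b = 0 := by
        have := hb; omega
      have e3z : (b : ℤ) * q - j + x = 0 := by
        have := hqb; omega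
      have hyq : (y : ℤ) = (q : ℤ) - x := by
        have : y = q - x := hy; omega
      zify
      rw [hyq]
      linear_combination (x : ℤ) * e1z + (q : ℤ) * e2z + (d₀ : ℤ) * e3z
    have hmem : x * A' + y * B' ∈ Rset := by
      rcases Nat.eq_zero_or_pos x with hx0 | hxpos
      · rw [hx0]
        simp only [Nat.zero_mul, Nat.zero_add]
        exact smul_mem Rset hadd y B' hBr (by omega)
      · exact hadd _ (smul_mem Rset hadd x A' hA'r hxpos) _
          (smul_mem Rset hadd y B' hBr (by omega))
    rwa [hkey] at hmem

end SchurAux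


open EDaux MorAux KeyAux SchurAux in
set_option maxHeartbeats 2000000 in
/-- No uniform morphism of rank `r ≥ 2` over a finite alphabet
generates an infinite ε-synchronization string for any `ε ∈ (0,1)`: for every
symbol `σ` there is an `m` such that `φ^m(σ)` is not an ε-synchronization
string. -/
theorem morphism_not_sync {α : Type*} [Fintype α] (r : ℕ) (hr : 2 ≤ r)
    (φ : α → List α) (hφ : ∀ σ : α, (φ σ).length = r)
    (ε : ℝ) (hε : 0 < ε) (hε1 : ε < 1) (σ : α) :
    ∃ m : ℕ, ¬ IsSyncString ε ((fun l : List α => (l.map φ).flatten)^[m] [σ]) := by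

  classical
  show ∃ m : ℕ, ¬ IsSyncString ε ((gmor φ)^[m] [σ])
  haveI : Inhabited α := ⟨σ⟩
  -- ===== closures and the minimal strongly connected letter =====
  set clos : α → Finset α := fun e => Finset.univ.filter (fun f => ∃ k, f ∈ F φ k e) with hclos
  have hmem_clos : ∀ e f, f ∈ clos e ↔ ∃ k, f ∈ F φ k e := by
    intro e f; simp [hclos]
  have hclos_self : ∀ e, e ∈ clos e := fun e => (hmem_clos e e).2 ⟨0, mem_F_self φ e⟩
  have hclos_trans : ∀ e f x, f ∈ clos e → x ∈ clos f → x ∈ clos e := by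
    intro e f x hf hx
    obtain ⟨k1, hk1⟩ := (hmem_clos e f).1 hf
    obtain ⟨k2, hk2⟩ := (hmem_clos f x).1 hx
    exact (hmem_clos e x).2 ⟨k2 + k1, mem_trans hk2 hk1⟩
  obtain ⟨cs, hcsS, hmin⟩ :=
    Finset.exists_min_image (clos σ) (fun e => (clos e).card) ⟨σ, hclos_self σ⟩
  have hstrong : ∀ e, e ∈ clos cs → cs ∈ clos e := by
    intro e he
    have he0 : e ∈ clos σ := hclos_trans σ cs e hcsS he
    have hsub : clos e ⊆ clos cs := fun x hx => hclos_trans cs e x he hx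
    have heq : clos e = clos cs := Finset.eq_of_subset_of_card_le hsub (hmin e he0)
    rw [heq]; exact hclos_self cs
  -- ===== recurrence exponent p =====
  have hhead : (φ cs).getD 0 σ ∈ F φ 1 cs := by
    rw [F_one]; exact getD_mem' _ _ _ (by rw [hφ]; omega)
  have he₁ : (φ cs).getD 0 σ ∈ clos cs := (hmem_clos _ _).2 ⟨1, hhead⟩
  obtain ⟨k₀, hk₀⟩ := (hmem_clos _ cs).1 (hstrong _ he₁)
  set p := k₀ + 1 with hp
  have hppos : 0 < p := by omega
  have hpcs : cs ∈ F φ p cs := by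
    rw [hp]; exact mem_trans hk₀ hhead
  -- ===== return-time semigroup and Schur =====
  set Rset : Set ℕ := {q | 0 < q ∧ cs ∈ F φ q cs} with hRs
  have hadd : ∀ a ∈ Rset, ∀ b ∈ Rset, a + b ∈ Rset := by
    rintro a ⟨ha0, ha⟩ b ⟨hb0, hb⟩
    exact ⟨by omega, mem_trans ha hb⟩
  have hpR : p ∈ Rset := ⟨hppos, hpcs⟩
  obtain ⟨d₀, N₀, hd₀pos, hN₀1, hG1, hSchur⟩ :=
    schur Rset hadd p hpR hppos (fun q hq => hq.1)
  have hd₀p : d₀ ∣ p := hG1 p hpR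
  -- ===== path-length choices =====
  have hkex : ∀ e : α, ∃ k, e ∈ clos cs → cs ∈ F φ k e := by
    intro e
    by_cases he : e ∈ clos cs
    · obtain ⟨k, hk⟩ := (hmem_clos e cs).1 (hstrong e he); exact ⟨k, fun _ => hk⟩
    · exact ⟨0, fun h => absurd h he⟩
  choose kk hkk using hkex
  have hlex : ∀ e : α, ∃ l, e ∈ clos cs → e ∈ F φ l cs := by
    intro e
    by_cases he : e ∈ clos cs
    · obtain ⟨l, hl⟩ := (hmem_clos cs e).1 he; exact ⟨l, fun _ => hl⟩
    · exact ⟨0, fun h => absurd h he⟩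
  choose ll hll using hlex
  -- ===== the power morphism =====
  set Φ : α → List α := fun c => F φ p c with hΦdef
  set R := r ^ p with hRdef
  have hΦlen : ∀ c, (Φ c).length = R := fun c => by
    rw [hΦdef]; rw [length_F φ r hφ]
  have hR2 : 2 ≤ R := le_trans hr (Nat.le_self_pow (by omega) r)
  have hFΦ : ∀ t c, F Φ t c = F φ (p * t) c := fun t c => F_pow φ p t c
  -- ===== the pair system =====
  set P : Finset (α × α) :=
    Finset.univ.filter (fun xy => ∃ K, xy.1 ∈ F Φ K cs ∧ xy.2 ∈ F Φ K cs) with hPdef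
  have hPmem : ∀ x y, (x, y) ∈ P ↔ ∃ K, x ∈ F Φ K cs ∧ y ∈ F Φ K cs := by
    intro x y; simp [hPdef]
  have hPne : P.Nonempty :=
    ⟨(cs, cs), (hPmem cs cs).2 ⟨0, mem_F_self Φ cs, mem_F_self Φ cs⟩⟩
  have hPexp : ∀ x y, (x, y) ∈ P → ∀ s x' y', x' ∈ F Φ s x → y' ∈ F Φ s y → (x', y') ∈ P := by
    intro x y hxy s x' y' hx' hy'
    obtain ⟨K, hx, hy⟩ := (hPmem x y).1 hxy
    exact (hPmem x' y').2 ⟨s + K, mem_trans hx' hx, mem_trans hy' hy⟩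
  have hPC : ∀ x y, (x, y) ∈ P → x ∈ clos cs ∧ y ∈ clos cs := by
    intro x y hxy
    obtain ⟨K, hx, hy⟩ := (hPmem x y).1 hxy
    rw [hFΦ] at hx hy
    exact ⟨(hmem_clos _ _).2 ⟨_, hx⟩, (hmem_clos _ _).2 ⟨_, hy⟩⟩
  -- ===== per-pair common descendant =====
  have hUpair : ∀ xy : α × α, ∃ n, 1 ≤ n ∧
      (xy ∈ P → ∃ z, z ∈ F Φ n xy.1 ∧ z ∈ F Φ n xy.2) := by
    rintro ⟨x, y⟩
    by_cases hxy : (x, y) ∈ P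
    swap
    · exact ⟨1, le_refl 1, fun h => absurd h hxy⟩
    obtain ⟨K, hxK, hyK⟩ := (hPmem x y).1 hxy
    obtain ⟨hxC, hyC⟩ := hPC x y hxy
    have hkx := hkk x hxC
    have hky := hkk y hyC
    have hlx := hll x hxC
    rw [hFΦ] at hxK hyK
    -- divisibility facts
    have hD1 : d₀ ∣ (kk x + (p * K + p)) := by
      refine hG1 _ ⟨by omega, ?_⟩
      exact mem_trans hkx (mem_trans hxK hpcs)
    have hD2 : d₀ ∣ (kk y + (p * K + p)) := by
      refine hG1 _ ⟨by omega, ?_⟩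
      exact mem_trans hky (mem_trans hyK hpcs)
    have hD3 : d₀ ∣ (ll x + kk x + p) := by
      refine hG1 _ ⟨by omega, ?_⟩
      have h1 : cs ∈ F φ (kk x + ll x) cs := mem_trans hkx hlx
      have h2 : cs ∈ F φ (p + (kk x + ll x)) cs := mem_trans hpcs h1
      have he : ll x + kk x + p = p + (kk x + ll x) := by ring
      rwa [he]
    have hDx : d₀ ∣ (kk x + ll x) := by
      have h := Nat.dvd_sub hD3 hd₀p
      have he : ll x + kk x + p - p = kk x + ll x := by omega
      rwa [he] at h
    have hDy : d₀ ∣ (kk y + ll x) := by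
      have hZ : (d₀ : ℤ) ∣ ((kk y : ℤ) + ll x) := by
        have z1 : (d₀ : ℤ) ∣ ((kk x : ℤ) + (p * K + p)) := by exact_mod_cast hD1
        have z2 : (d₀ : ℤ) ∣ ((kk y : ℤ) + (p * K + p)) := by exact_mod_cast hD2
        have z3 : (d₀ : ℤ) ∣ ((kk x : ℤ) + ll x) := by exact_mod_cast hDx
        have he : ((kk y : ℤ) + ll x) = ((kk y : ℤ) + (p * K + p)) + ((kk x : ℤ) + ll x)
            - ((kk x : ℤ) + (p * K + p)) := by ring
        rw [he]
        exact dvd_sub (dvd_add z2 z3) z1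
      exact_mod_cast hZ
    -- the common exponent
    set mEx := kk x + kk y + ll x + d₀ * N₀ + p + 1 with hmEx
    have hpm : mEx ≤ p * mEx := Nat.le_mul_of_pos_left _ hppos
    have hdvd1 : d₀ ∣ (p * mEx - (kk x + ll x)) :=
      Nat.dvd_sub (Dvd.dvd.mul_right hd₀p mEx) hDx
    set j₁ := (p * mEx - (kk x + ll x)) / d₀ with hj₁def
    have hj₁ : d₀ * j₁ = p * mEx - (kk x + ll x) := Nat.mul_div_cancel' hdvd1
    have hj₁N : N₀ ≤ j₁ := by
      have h1 : d₀ * N₀ ≤ d₀ * j₁ := by omega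
      exact Nat.le_of_mul_le_mul_left h1 hd₀pos
    have hcs1 : cs ∈ F φ (d₀ * j₁) cs := (hSchur j₁ hj₁N).2
    have hx1 : x ∈ F φ (ll x + (d₀ * j₁ + kk x)) x := mem_trans hlx (mem_trans hcs1 hkx)
    have hxexp : ll x + (d₀ * j₁ + kk x) = p * mEx := by omega
    have hdvd2 : d₀ ∣ (p * mEx - (kk y + ll x)) :=
      Nat.dvd_sub (Dvd.dvd.mul_right hd₀p mEx) hDy
    set j₂ := (p * mEx - (kk y + ll x)) / d₀ with hj₂def
    have hj₂ : d₀ * j₂ = p * mEx - (kk y + ll x) := Nat.mul_div_cancel' hdvd2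
    have hj₂N : N₀ ≤ j₂ := by
      have h1 : d₀ * N₀ ≤ d₀ * j₂ := by omega
      exact Nat.le_of_mul_le_mul_left h1 hd₀pos
    have hcs2 : cs ∈ F φ (d₀ * j₂) cs := (hSchur j₂ hj₂N).2
    have hy2 : x ∈ F φ (ll x + (d₀ * j₂ + kk y)) y := mem_trans hlx (mem_trans hcs2 hky)
    have hyexp : ll x + (d₀ * j₂ + kk y) = p * mEx := by omega
    refine ⟨mEx, by omega, fun _ => ⟨x, ?_, ?_⟩⟩
    · rw [hFΦ, ← hxexp]; exact hx1
    · rw [hFΦ, ← hyexp]; exact hy2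
  choose nP hnP1 hnPz using hUpair
  -- ===== uniform common-descendant level =====
  set n₀ := max 1 (P.sup nP) with hn₀def
  have hn₀1 : 1 ≤ n₀ := le_max_left _ _
  have hpad : ∀ x y n, (∃ z, z ∈ F Φ n x ∧ z ∈ F Φ n y) →
      ∃ z, z ∈ F Φ (n + 1) x ∧ z ∈ F Φ (n + 1) y := by
    rintro x y n ⟨z, hzx, hzy⟩
    have hz1 : (Φ z).getD 0 σ ∈ F Φ 1 z := by
      rw [F_one]; exact getD_mem' _ _ _ (by rw [hΦlen]; omega)
    refine ⟨(Φ z).getD 0 σ, ?_, ?_⟩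
    · rw [Nat.add_comm n 1]; exact mem_trans hz1 hzx
    · rw [Nat.add_comm n 1]; exact mem_trans hz1 hzy
  have hUup : ∀ x y n n', n ≤ n' → (∃ z, z ∈ F Φ n x ∧ z ∈ F Φ n y) →
      (∃ z, z ∈ F Φ n' x ∧ z ∈ F Φ n' y) := by
    intro x y n n' hle h
    induction n', hle using Nat.le_induction with
    | base => exact h
    | succ n' _ ih => exact hpad x y n' ih
  have hU : ∀ x y, (x, y) ∈ P → ∃ z, z ∈ F Φ n₀ x ∧ z ∈ F Φ n₀ y := by
    intro x y hxy
    exact hUup x y (nP (x, y)) n₀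
      (le_trans (Finset.le_sup hxy) (le_max_right _ _)) (hnPz (x, y) hxy)
  -- ===== apply the key lemma =====
  obtain ⟨T, hT⟩ := key σ Φ R hΦlen hR2 P hPne hPexp n₀ hn₀1 hU (2 * (1 - ε)) (by linarith)
  -- ===== assemble the violating word =====
  obtain ⟨m₁, hm₁⟩ := (hmem_clos σ cs).1 hcsS
  obtain ⟨l₁, l₂, hsplit⟩ := List.append_of_mem hm₁
  set a₁ := (Φ cs).getD 0 σ with ha₁
  set b₁ := (Φ cs).getD 1 σ with hb₁
  have hab : (a₁, b₁) ∈ P := by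
    refine (hPmem _ _).2 ⟨1, ?_, ?_⟩
    · rw [F_one]; exact getD_mem' _ _ _ (by rw [hΦlen]; omega)
    · rw [F_one]; exact getD_mem' _ _ _ (by rw [hΦlen]; omega)
  have hΦsplit : Φ cs = [a₁] ++ ([b₁] ++ (Φ cs).drop 2) := by
    have hlen2 : 2 ≤ (Φ cs).length := by rw [hΦlen]; omega
    obtain ⟨x, l', hxl⟩ : ∃ x l', Φ cs = x :: l' := by
      cases hc : Φ cs with
      | nil => rw [hc] at hlen2; simp at hlen2
      | cons x l' => exact ⟨x, l', rfl⟩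
    obtain ⟨y, l'', hyl⟩ : ∃ y l'', l' = y :: l'' := by
      cases hc : l' with
      | nil => rw [hxl, hc] at hlen2; simp at hlen2
      | cons y l'' => exact ⟨y, l'', rfl⟩
    have hxy : Φ cs = x :: y :: l'' := by rw [hxl, hyl]
    have hax : a₁ = x := by rw [ha₁, hxy]; rfl
    have hby : b₁ = y := by rw [hb₁, hxy]; rfl
    rw [hxy, hax, hby]
    simp
  -- word at level m₁ + p
  have hW₂eq : (gmor φ)^[p] (F φ m₁ σ) =
      (gmor φ)^[p] l₁ ++ (Φ cs ++ (gmor φ)^[p] l₂) := by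
    rw [hsplit]
    rw [show l₁ ++ cs :: l₂ = l₁ ++ ([cs] ++ l₂) from by simp]
    rw [iter_append, iter_append]
    rfl
  set X := (gmor φ)^[p * T] ((gmor φ)^[p] l₁) with hX
  set Y := (gmor φ)^[p * T] ((Φ cs).drop 2 ++ (gmor φ)^[p] l₂) with hY
  set WA := F φ (p * T) a₁ with hWA
  set WB := F φ (p * T) b₁ with hWB
  have hW₃ : (gmor φ)^[p * T] ((gmor φ)^[p] (F φ m₁ σ)) = X ++ (WA ++ (WB ++ Y)) := by
    rw [hW₂eq, hΦsplit]
    rw [show ([a₁] ++ ([b₁] ++ (Φ cs).drop 2)) ++ (gmor φ)^[p] l₂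
        = [a₁] ++ ([b₁] ++ ((Φ cs).drop 2 ++ (gmor φ)^[p] l₂)) from by simp]
    rw [iter_append, iter_append, iter_append]
    rfl
  set m := p * T + (p + m₁) with hmdef
  have hWm : (gmor φ)^[m] [σ] = X ++ (WA ++ (WB ++ Y)) := by
    rw [hmdef, Function.iterate_add_apply, Function.iterate_add_apply]
    exact hW₃
  refine ⟨m, ?_⟩
  intro hsync
  set LT := r ^ (p * T) with hLT
  have hLT1 : 1 ≤ LT := Nat.one_le_pow _ _ (by omega)
  have hWAlen : WA.length = LT := by rw [hWA, length_F φ r hφ]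
  have hWBlen : WB.length = LT := by rw [hWB, length_F φ r hφ]
  set i := X.length + 1 with hidef
  have hlen : ((gmor φ)^[m] [σ]).length = X.length + (LT + (LT + Y.length)) := by
    rw [hWm]
    simp [List.length_append, hWAlen, hWBlen]
  have hcond := hsync i (i + LT) (i + LT + LT) (by omega) (by omega) (by omega)
    (by rw [hlen]; omega)
  have hslice1 : strSlice ((gmor φ)^[m] [σ]) i (i + LT) = WA := by
    rw [hWm, strSlice]
    have h1 : i - 1 = X.length := by omega
    have h2 : i + LT - i = LT := by omega
    rw [h1, h2, List.drop_left]
    exact List.take_left' hWAlen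
  have hslice2 : strSlice ((gmor φ)^[m] [σ]) (i + LT) (i + LT + LT) = WB := by
    rw [hWm, strSlice]
    have h1 : i + LT - 1 = X.length + LT := by omega
    have h2 : i + LT + LT - (i + LT) = LT := by omega
    rw [h1, h2]
    have hre : X ++ (WA ++ (WB ++ Y)) = (X ++ WA) ++ (WB ++ Y) := by
      simp [List.append_assoc]
    rw [hre]
    have h3 : (X ++ WA).length = X.length + LT := by simp [hWAlen]
    rw [← h3, List.drop_left]
    exact List.take_left' hWBlen
  rw [hslice1, hslice2] at hcond
  have hED : (editDistance WA WB : ℝ) < 2 * (1 - ε) * (R : ℝ) ^ T := by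
    have h := hT a₁ b₁ hab
    rw [hFΦ, hFΦ] at h
    exact h
  have hRT : (R : ℝ) ^ T = (LT : ℝ) := by
    rw [hRdef, hLT]
    push_cast
    rw [← pow_mul]
  have hcast : ((i + LT + LT : ℕ) : ℝ) - (i : ℝ) = 2 * (LT : ℝ) := by push_cast; ring
  rw [hcast] at hcond
  rw [hRT] at hED
  linarith
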